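/- Let T > 0, δ ∈ (0,1) and r ≥ 1, and set t = δ^{−2}T. Let X and Y be independent random variables with X Poisson distributed with mean t and Y Poisson distributed with mean (1−δ)t. Then E[min(1, (1−δ)^{X−Y})] ≤ exp(−(T − r·√(2T))) + r^{−2}, where (1−δ)^{X−Y} denotes the integer power of the real number 1−δ ∈ (0,1) with (possibly negative) integer exponent X − Y. -/

import Mathlib

open MeasureTheory ProbabilityTheory
open scoped NNReal ENNReal

lemma hasSum_exp_nat (x : ℝ) : HasSum (fun n : ℕ => x ^ n / n.factorial) (Real.exp x) := by
  rw [Real.exp_eq_exp_ℝ]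
  exact NormedSpace.expSeries_div_hasSum_exp x

lemma hasSum_n_exp (x : ℝ) :
    HasSum (fun n : ℕ => (n : ℝ) * (x ^ n / n.factorial)) (x * Real.exp x) := by
  have h := (hasSum_exp_nat x).mul_left x
  have h2 : (fun n : ℕ => ((n + 1 : ℕ) : ℝ) * (x ^ (n + 1) / (n + 1).factorial))
      = fun n : ℕ => x * (x ^ n / n.factorial) := by
    funext n
    rw [Nat.factorial_succ, pow_succ]
    push_cast
    have hn : ((n.factorial : ℝ)) ≠ 0 := Nat.cast_ne_zero.2 n.factorial_ne_zero
    field_simp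
  have h3 : HasSum (fun n : ℕ => ((n + 1 : ℕ) : ℝ) * (x ^ (n + 1) / (n + 1).factorial))
      (x * Real.exp x) := by rw [h2]; exact h
  have h4 := (hasSum_nat_add_iff (f := fun n : ℕ => (n : ℝ) * (x ^ n / n.factorial)) 1).1 h3
  simpa using h4

lemma hasSum_nn_exp (x : ℝ) :
    HasSum (fun n : ℕ => ((n : ℝ) * ((n : ℝ) - 1)) * (x ^ n / n.factorial))
      (x ^ 2 * Real.exp x) := by
  have h := (hasSum_exp_nat x).mul_left (x ^ 2)
  have h2 : (fun n : ℕ => (((n + 2 : ℕ) : ℝ) * (((n + 2 : ℕ) : ℝ) - 1)) *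
      (x ^ (n + 2) / (n + 2).factorial)) = fun n : ℕ => x ^ 2 * (x ^ n / n.factorial) := by
    funext n
    rw [Nat.factorial_succ, Nat.factorial_succ, pow_succ, pow_succ]
    push_cast
    have hn : ((n.factorial : ℝ)) ≠ 0 := Nat.cast_ne_zero.2 n.factorial_ne_zero
    field_simp
    ring
  have h3 : HasSum (fun n : ℕ => (((n + 2 : ℕ) : ℝ) * (((n + 2 : ℕ) : ℝ) - 1)) *
      (x ^ (n + 2) / (n + 2).factorial)) (x ^ 2 * Real.exp x) := by rw [h2]; exact h
  have h4 := (hasSum_nat_add_iff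
    (f := fun n : ℕ => ((n : ℝ) * ((n : ℝ) - 1)) * (x ^ n / n.factorial)) 2).1 h3
  simpa [Finset.sum_range_succ] using h4

lemma hasSum_poisson_id (r : ℝ≥0) :
    HasSum (fun n : ℕ => (n : ℝ) * poissonPMFReal r n) (r : ℝ) := by
  have h := (hasSum_n_exp (r : ℝ)).mul_left (Real.exp (-(r : ℝ)))
  have h2 : Real.exp (-(r : ℝ)) * ((r : ℝ) * Real.exp (r : ℝ)) = (r : ℝ) := by
    rw [mul_comm, mul_assoc, ← Real.exp_add]; simp
  rw [h2] at h
  convert h using 2 with n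
  · rfl
  unfold poissonPMFReal
  ring

lemma hasSum_poisson_sq (r : ℝ≥0) :
    HasSum (fun n : ℕ => (n : ℝ) ^ 2 * poissonPMFReal r n) ((r : ℝ) + (r : ℝ) ^ 2) := by
  have h1 := (hasSum_nn_exp (r : ℝ)).mul_left (Real.exp (-(r : ℝ)))
  have h2 := (hasSum_n_exp (r : ℝ)).mul_left (Real.exp (-(r : ℝ)))
  have he : Real.exp (-(r : ℝ)) * Real.exp (r : ℝ) = 1 := by
    rw [← Real.exp_add]; simp
  have h := h1.add h2
  have hval : Real.exp (-(r : ℝ)) * ((r : ℝ) ^ 2 * Real.exp (r : ℝ))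
      + Real.exp (-(r : ℝ)) * ((r : ℝ) * Real.exp (r : ℝ)) = (r : ℝ) + (r : ℝ) ^ 2 := by
    have : ∀ a : ℝ, Real.exp (-(r : ℝ)) * (a * Real.exp (r : ℝ)) = a := by
      intro a; rw [mul_comm, mul_assoc, ← Real.exp_add]; simp
    rw [this, this]; ring
  rw [hval] at h
  convert h using 2 with n
  · rfl
  unfold poissonPMFReal
  ring

lemma integrable_poisson_of_summable {r : ℝ≥0} {f : ℕ → ℝ} (hf0 : ∀ n, 0 ≤ f n)
    (hsum : Summable (fun n => f n * poissonPMFReal r n)) :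
    Integrable f (poissonMeasure r) := by
  refine ⟨(measurable_from_top (f := f)).aestronglyMeasurable, ?_⟩
  rw [HasFiniteIntegral]
  have hsingle : ∀ n : ℕ, poissonMeasure r {n} = ENNReal.ofReal (poissonPMFReal r n) := by
    intro n
    rw [poissonMeasure_singleton]
    rfl
  calc ∫⁻ a, ‖f a‖₊ ∂(poissonMeasure r)
      = ∑' n : ℕ, ‖f n‖₊ * poissonMeasure r {n} := lintegral_countable' _
    _ = ∑' n : ℕ, ENNReal.ofReal (f n * poissonPMFReal r n) := by
        congr 1; funext n
        rw [hsingle n, ← enorm_eq_nnnorm, ← ofReal_norm, Real.norm_of_nonneg (hf0 n),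
          ← ENNReal.ofReal_mul (hf0 n)]
    _ = ENNReal.ofReal (∑' n, f n * poissonPMFReal r n) := by
        rw [ENNReal.ofReal_tsum_of_nonneg (fun n => mul_nonneg (hf0 n) poissonPMFReal_nonneg) hsum]
    _ < ⊤ := ENNReal.ofReal_lt_top

lemma integrable_poisson_id (r : ℝ≥0) :
    Integrable (fun n : ℕ => (n : ℝ)) (poissonMeasure r) :=
  integrable_poisson_of_summable (fun n => Nat.cast_nonneg n) (hasSum_poisson_id r).summable

lemma integrable_poisson_sq (r : ℝ≥0) :
    Integrable (fun n : ℕ => (n : ℝ) ^ 2) (poissonMeasure r) :=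
  integrable_poisson_of_summable (fun n => sq_nonneg _) (hasSum_poisson_sq r).summable

lemma toReal_poissonPMF (r : ℝ≥0) (n : ℕ) :
    ((poissonPMF r) n).toReal = poissonPMFReal r n := by
  rw [show (poissonPMF r) n = ENNReal.ofReal (poissonPMFReal r n) from rfl,
    ENNReal.toReal_ofReal poissonPMFReal_nonneg]

lemma integral_poisson_id (r : ℝ≥0) :
    ∫ n, (n : ℝ) ∂(poissonMeasure r) = (r : ℝ) := by
  rw [integral_poissonMeasure' (integrable_poisson_id r)]
  have : (fun n : ℕ => (Real.exp (-(r : ℝ)) * (r : ℝ) ^ n / n.factorial) • (n : ℝ))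
      = fun n : ℕ => (n : ℝ) * poissonPMFReal r n := by
    funext n; rw [smul_eq_mul, mul_comm]; rfl
  rw [this, (hasSum_poisson_id r).tsum_eq]

lemma integral_poisson_sq (r : ℝ≥0) :
    ∫ n, (n : ℝ) ^ 2 ∂(poissonMeasure r) = (r : ℝ) + (r : ℝ) ^ 2 := by
  rw [integral_poissonMeasure' (integrable_poisson_sq r)]
  have : (fun n : ℕ => (Real.exp (-(r : ℝ)) * (r : ℝ) ^ n / n.factorial) • (n : ℝ) ^ 2)
      = fun n : ℕ => (n : ℝ) ^ 2 * poissonPMFReal r n := by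
    funext n; rw [smul_eq_mul, mul_comm]; rfl
  rw [this, (hasSum_poisson_sq r).tsum_eq]

lemma memLp_poisson_id (r : ℝ≥0) : MemLp (fun n : ℕ => (n : ℝ)) 2 (poissonMeasure r) :=
  (memLp_two_iff_integrable_sq (measurable_from_top).aestronglyMeasurable).2
    (integrable_poisson_sq r)

/-- **key estimate in Lemma 2.6.** Let `T > 0`, `δ ∈ (0,1)`,
`r ≥ 1`, and `t = δ⁻² T`. Let `X, Y` be independent random variables with
`X` Poisson distributed with mean `t` and `Y` Poisson distributed with
mean `(1−δ) t`. Then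
`E[min(1, (1−δ)^(X−Y))] ≤ exp(−(T − r √(2T))) + r⁻²`,
where `(1−δ)^(X−Y)` is an integer (possibly negative) power of `1−δ`. -/
theorem poisson_hitting_estimate
    {Ω : Type*} [MeasurableSpace Ω] (P : Measure Ω) [IsProbabilityMeasure P]
    (T δ r : ℝ) (hT : 0 < T) (hδ : δ ∈ Set.Ioo (0 : ℝ) 1) (hr : 1 ≤ r)
    (X Y : Ω → ℕ) (hXY : IndepFun X Y P)
    (hX : Measure.map X P = poissonMeasure (Real.toNNReal ((δ ^ 2)⁻¹ * T)))
    (hY : Measure.map Y P = poissonMeasure (Real.toNNReal ((1 - δ) * ((δ ^ 2)⁻¹ * T)))) :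
    ∫ ω, min 1 ((1 - δ) ^ ((X ω : ℤ) - (Y ω : ℤ))) ∂P
      ≤ Real.exp (-(T - r * Real.sqrt (2 * T))) + r⁻¹ ^ 2 := by
  obtain ⟨hδ0, hδ1⟩ := hδ
  have hb : (0 : ℝ) < 1 - δ := by linarith
  have hr0 : (0 : ℝ) < r := lt_of_lt_of_le one_pos hr
  have htX : (0 : ℝ) < (δ ^ 2)⁻¹ * T := by positivity
  have htY : (0 : ℝ) ≤ (1 - δ) * ((δ ^ 2)⁻¹ * T) := by positivity
  set tX : ℝ := (δ ^ 2)⁻¹ * T with htX_def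
  set tY : ℝ := (1 - δ) * ((δ ^ 2)⁻¹ * T) with htY_def
  have hcX : ((Real.toNNReal tX : ℝ≥0) : ℝ) = tX := Real.coe_toNNReal _ htX.le
  have hcY : ((Real.toNNReal tY : ℝ≥0) : ℝ) = tY := Real.coe_toNNReal _ htY
  -- a.e.-measurability of X and Y
  have aemX : AEMeasurable X P := by
    by_contra h
    rw [Measure.map_of_not_aemeasurable h] at hX
    have h1 := measure_univ (μ := poissonMeasure (Real.toNNReal tX))
    rw [← hX] at h1
    simp at h1
  have aemY : AEMeasurable Y P := by
    by_contra h
    rw [Measure.map_of_not_aemeasurable h] at hY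
    have h1 := measure_univ (μ := poissonMeasure (Real.toNNReal tY))
    rw [← hY] at h1
    simp at h1
  have mN : Measurable (fun n : ℕ => (n : ℝ)) := measurable_from_top
  set Xr : Ω → ℝ := fun ω => (X ω : ℝ) with hXr_def
  set Yr : Ω → ℝ := fun ω => (Y ω : ℝ) with hYr_def
  have aemXr : AEMeasurable Xr P := mN.comp_aemeasurable aemX
  have aemYr : AEMeasurable Yr P := mN.comp_aemeasurable aemY
  -- second moments
  have hXr2 : MemLp Xr 2 P := by
    have h := memLp_poisson_id (Real.toNNReal tX)
    rw [← hX] at h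
    exact (memLp_map_measure_iff mN.aestronglyMeasurable aemX).1 h
  have hYr2 : MemLp Yr 2 P := by
    have h := memLp_poisson_id (Real.toNNReal tY)
    rw [← hY] at h
    exact (memLp_map_measure_iff mN.aestronglyMeasurable aemY).1 h
  have hIX : Integrable Xr P := hXr2.integrable one_le_two
  have hIY : Integrable Yr P := hYr2.integrable one_le_two
  have hIX2 : Integrable (fun ω => Xr ω ^ 2) P :=
    (memLp_two_iff_integrable_sq hXr2.aestronglyMeasurable).1 hXr2
  have hIY2 : Integrable (fun ω => Yr ω ^ 2) P :=
    (memLp_two_iff_integrable_sq hYr2.aestronglyMeasurable).1 hYr2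
  -- expectations
  have hEX : ∫ ω, Xr ω ∂P = tX := by
    have h := integral_map (f := fun n : ℕ => (n : ℝ)) aemX mN.aestronglyMeasurable
    rw [hX, integral_poisson_id, hcX] at h
    exact h.symm
  have hEY : ∫ ω, Yr ω ∂P = tY := by
    have h := integral_map (f := fun n : ℕ => (n : ℝ)) aemY mN.aestronglyMeasurable
    rw [hY, integral_poisson_id, hcY] at h
    exact h.symm
  have hEX2 : ∫ ω, Xr ω ^ 2 ∂P = tX + tX ^ 2 := by
    have h := integral_map (f := fun n : ℕ => (n : ℝ) ^ 2) aemX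
      (mN.pow_const 2).aestronglyMeasurable
    rw [hX, integral_poisson_sq, hcX] at h
    exact h.symm
  have hEY2 : ∫ ω, Yr ω ^ 2 ∂P = tY + tY ^ 2 := by
    have h := integral_map (f := fun n : ℕ => (n : ℝ) ^ 2) aemY
      (mN.pow_const 2).aestronglyMeasurable
    rw [hY, integral_poisson_sq, hcY] at h
    exact h.symm
  -- independence and product expectation
  have hIndr : IndepFun Xr Yr P := hXY.comp mN mN
  have hIXY : Integrable (Xr * Yr) P := hIndr.integrable_mul hIX hIY
  have hEXY : ∫ ω, Xr ω * Yr ω ∂P = tX * tY := by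
    have h := hIndr.integral_fun_mul_eq_mul_integral hIX.aestronglyMeasurable hIY.aestronglyMeasurable
    simpa [hEX, hEY] using h
  -- the difference and its measurable modification
  set Z : Ω → ℝ := fun ω => Xr ω - Yr ω with hZ_def
  have aemZ : AEMeasurable Z P := aemXr.sub aemYr
  set Z' : Ω → ℝ := aemZ.mk Z with hZ'_def
  have hZeq : Z =ᵐ[P] Z' := aemZ.ae_eq_mk
  have hmZ' : Measurable Z' := aemZ.measurable_mk
  have hZ2 : MemLp Z 2 P := hXr2.sub hYr2
  have hZ'2 : MemLp Z' 2 P := hZ2.ae_eq hZeq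
  have hIZ : Integrable Z P := hZ2.integrable one_le_two
  have hEZ : ∫ ω, Z ω ∂P = δ⁻¹ * T := by
    rw [hZ_def]
    rw [integral_sub hIX hIY, hEX, hEY, htY_def, htX_def]
    field_simp
    try ring
  have hEZ' : ∫ ω, Z' ω ∂P = δ⁻¹ * T := by
    rw [← integral_congr_ae hZeq]; exact hEZ
  have hIZ2 : Integrable (fun ω => Z ω ^ 2) P :=
    (memLp_two_iff_integrable_sq hZ2.aestronglyMeasurable).1 hZ2
  have hEZ2 : ∫ ω, Z ω ^ 2 ∂P = tX + tX ^ 2 + (tY + tY ^ 2) - 2 * (tX * tY) := by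
    have hexp : (fun ω => Z ω ^ 2)
        = fun ω => Xr ω ^ 2 + Yr ω ^ 2 - 2 * (Xr ω * Yr ω) := by
      funext ω; simp only [hZ_def]; ring
    have h1' : Integrable (fun ω => Xr ω ^ 2 + Yr ω ^ 2) P := hIX2.add hIY2
    have h2' : Integrable (fun ω => 2 * (Xr ω * Yr ω)) P := hIXY.const_mul 2
    rw [hexp, integral_sub h1' h2', integral_add hIX2 hIY2, integral_const_mul,
      hEXY, hEX2, hEY2]
  have hEZ'2 : ∫ ω, Z' ω ^ 2 ∂P = tX + tX ^ 2 + (tY + tY ^ 2) - 2 * (tX * tY) := by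
    have hsq : (fun ω => Z ω ^ 2) =ᵐ[P] (fun ω => Z' ω ^ 2) :=
      hZeq.mono fun ω h => by simp only [h]
    rw [← integral_congr_ae hsq]; exact hEZ2
  -- variance of Z'
  have hvarZ' : variance Z' P = tX + tY := by
    rw [variance_eq_sub hZ'2]
    have h1 : P[Z' ^ 2] = tX + tX ^ 2 + (tY + tY ^ 2) - 2 * (tX * tY) := by
      rw [← hEZ'2]; rfl
    have h2 : P[Z'] = δ⁻¹ * T := hEZ'
    rw [h1, h2]
    have hEZalt : δ⁻¹ * T = tX - tY := by
      rw [htX_def, htY_def]; field_simp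
      try ring
    rw [hEZalt]
    ring
  -- Chebyshev
  set c : ℝ := δ⁻¹ * (r * Real.sqrt (2 * T)) with hc_def
  have hsqrt : (0 : ℝ) < Real.sqrt (2 * T) := Real.sqrt_pos.2 (by linarith)
  have hc : 0 < c := by positivity
  set S : Set Ω := {ω | c ≤ |Z' ω - P[Z']|} with hS_def
  have hSm : MeasurableSet S :=
    measurableSet_le measurable_const ((hmZ'.sub measurable_const).abs)
  have cheb : P S ≤ ENNReal.ofReal (variance Z' P / c ^ 2) :=
    meas_ge_le_variance_div_sq hZ'2 hc
  have hvc : variance Z' P / c ^ 2 ≤ r⁻¹ ^ 2 := by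
    rw [hvarZ']
    have hc2 : c ^ 2 = (δ ^ 2)⁻¹ * (r ^ 2 * (2 * T)) := by
      rw [hc_def, mul_pow, mul_pow, Real.sq_sqrt (by linarith)]
      rw [← inv_pow]
    rw [div_le_iff₀ (by positivity)]
    rw [hc2, htX_def, htY_def]
    have hrinv : r⁻¹ ^ 2 * r ^ 2 = 1 := by
      field_simp
    have hδ2 : (0:ℝ) < (δ ^ 2)⁻¹ := by positivity
    calc (δ ^ 2)⁻¹ * T + (1 - δ) * ((δ ^ 2)⁻¹ * T)
        = (2 - δ) * ((δ ^ 2)⁻¹ * T) := by ring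
      _ ≤ 2 * ((δ ^ 2)⁻¹ * T) := by nlinarith
      _ = r⁻¹ ^ 2 * ((δ ^ 2)⁻¹ * (r ^ 2 * (2 * T))) := by
          field_simp
          try ring
  have hPS : (P S).toReal ≤ r⁻¹ ^ 2 := by
    have h := ENNReal.toReal_mono (ENNReal.ofReal_ne_top)
      (le_trans cheb (ENNReal.ofReal_le_ofReal hvc))
    rwa [ENNReal.toReal_ofReal (by positivity)] at h
  -- the integrand
  set F : Ω → ℝ := fun ω => min 1 ((1 - δ) ^ ((X ω : ℤ) - (Y ω : ℤ))) with hF_def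
  have hF_nonneg : ∀ ω, 0 ≤ F ω := fun ω =>
    le_min zero_le_one (zpow_pos hb _).le
  have hF_le_one : ∀ ω, F ω ≤ 1 := fun ω => min_le_left _ _
  have hF_meas : AEStronglyMeasurable F P := by
    have hinner : AEMeasurable (fun ω => (X ω : ℤ) - (Y ω : ℤ)) P :=
      ((measurable_from_top (f := fun n : ℕ => (n : ℤ))).comp_aemeasurable aemX).sub
        ((measurable_from_top (f := fun n : ℕ => (n : ℤ))).comp_aemeasurable aemY)
    exact ((measurable_from_top (f := fun z : ℤ => min 1 ((1 - δ) ^ z))).comp_aemeasurable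
      hinner).aestronglyMeasurable
  have hIF : Integrable F P := by
    refine Integrable.mono' (integrable_const 1) hF_meas (ae_of_all _ fun ω => ?_)
    rw [Real.norm_eq_abs, abs_of_nonneg (hF_nonneg ω)]
    exact hF_le_one ω
  set s0 : ℝ := T - r * Real.sqrt (2 * T) with hs0_def
  by_cases hcase : s0 ≤ 0
  · -- trivial case
    have h1 : ∫ ω, F ω ∂P ≤ 1 := by
      calc ∫ ω, F ω ∂P ≤ ∫ _, (1 : ℝ) ∂P :=
            integral_mono hIF (integrable_const 1) hF_le_one
        _ = 1 := by simp
    have h2 : (1 : ℝ) ≤ Real.exp (-s0) := by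
      rw [← Real.exp_zero]
      exact Real.exp_le_exp.2 (by linarith)
    have h3 : (0:ℝ) ≤ r⁻¹ ^ 2 := by positivity
    calc ∫ ω, F ω ∂P ≤ 1 := h1
      _ ≤ Real.exp (-s0) + r⁻¹ ^ 2 := by linarith
  · push_neg at hcase
    set a : ℝ := δ⁻¹ * s0 with ha_def
    have ha : 0 < a := by positivity
    have hμc : P[Z'] - c = a := by
      have : P[Z'] = δ⁻¹ * T := hEZ'
      rw [this, hc_def, ha_def, hs0_def]
      ring
    -- pointwise a.e. bound
    have hae : ∀ᵐ ω ∂P, F ω ≤ Real.exp (-s0) + S.indicator (fun _ => (1 : ℝ)) ω := by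
      filter_upwards [hZeq] with ω hω
      by_cases hωS : ω ∈ S
      · rw [Set.indicator_of_mem hωS]
        have := Real.exp_pos (-s0)
        have := hF_le_one ω
        linarith
      · rw [Set.indicator_of_notMem hωS]
        have hlt : |Z' ω - P[Z']| < c := not_le.1 hωS
        have hZa : a < Z ω := by
          rw [hω]
          have := abs_lt.1 hlt
          linarith [hμc]
        have hZcast : ((((X ω : ℤ) - (Y ω : ℤ)) : ℤ) : ℝ) = Z ω := by
          rw [hZ_def, hXr_def, hYr_def]
          push_cast
          ring
        have hzpow : (1 - δ) ^ ((X ω : ℤ) - (Y ω : ℤ)) ≤ Real.exp (-s0) := by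
          rw [← Real.rpow_intCast (1 - δ) ((X ω : ℤ) - (Y ω : ℤ)),
            Real.rpow_def_of_pos hb]
          rw [Real.exp_le_exp]
          have hlog : Real.log (1 - δ) ≤ -δ := by
            have := Real.log_le_sub_one_of_pos hb
            linarith
          have hlog0 : Real.log (1 - δ) ≤ 0 := by linarith
          calc Real.log (1 - δ) * ((((X ω : ℤ) - (Y ω : ℤ)) : ℤ) : ℝ)
              ≤ Real.log (1 - δ) * a := by
                rw [hZcast]
                exact mul_le_mul_of_nonpos_left (le_of_lt hZa) hlog0
            _ ≤ (-δ) * a := mul_le_mul_of_nonneg_right hlog ha.le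
            _ = -s0 := by
                rw [ha_def, ← mul_assoc, neg_mul, mul_inv_cancel₀ hδ0.ne', neg_mul, one_mul]
        calc F ω ≤ (1 - δ) ^ ((X ω : ℤ) - (Y ω : ℤ)) := min_le_right _ _
          _ ≤ Real.exp (-s0) := hzpow
          _ = Real.exp (-s0) + 0 := by ring
    have hIind : Integrable (S.indicator fun _ => (1 : ℝ)) P :=
      (integrable_const 1).indicator hSm
    have hmain : ∫ ω, F ω ∂P ≤ Real.exp (-s0) + (P S).toReal := by
      calc ∫ ω, F ω ∂P
          ≤ ∫ ω, (Real.exp (-s0) + S.indicator (fun _ => (1 : ℝ)) ω) ∂P :=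
            integral_mono_ae hIF ((integrable_const _).add hIind) hae
        _ = Real.exp (-s0) + (P S).toReal := by
            rw [integral_add (integrable_const _) hIind, integral_const,
              integral_indicator_const _ hSm]
            simp [measureReal_def]
    calc ∫ ω, F ω ∂P ≤ Real.exp (-s0) + (P S).toReal := hmain
      _ ≤ Real.exp (-s0) + r⁻¹ ^ 2 := by linarith
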